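/- Let the pair (e(k), ẽ(k)) evolve by e(k+1) = F e(k) + Ω ẽ(k), ẽ(k+1) = G ẽ(k) with ρ(F) < 1 and ρ(G) < 1, and let P > 0 satisfy FᵀPF − P = −(Q̃ + KᵀRK) for some Q̃ ≥ 0, R > 0 and matrix K with F = Ã + B̄K. Then the total cost J⋆(s) = Σ_{k=s}^∞ [e(k)ᵀQ̃e(k) + (K e(k) + D ẽ(k))ᵀ R (K e(k) + D ẽ(k))] (for any fixed matrix D) is finite for every s, and J⋆(s) − e(s)ᵀPe(s) → 0 as s → ∞. -/

import Mathlib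

open Matrix Filter Topology
open scoped ENNReal NNReal

attribute [local instance] Matrix.linftyOpNormedAddCommGroup Matrix.linftyOpNormedRing
  Matrix.linftyOpNormedAlgebra Matrix.linftyOpNormedSpace

private lemma norm_map_ofReal' {q : ℕ} (M : Matrix (Fin q) (Fin q) ℝ) :
    ‖M.map Complex.ofReal‖ = ‖M‖ := by
  rw [Matrix.linfty_opNorm_def, Matrix.linfty_opNorm_def]
  congr 1
  apply Finset.sup_congr rfl
  intro i _
  apply Finset.sum_congr rfl
  intro j _
  simp [Matrix.map_apply, ← Complex.norm_real, nnnorm]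
  apply NNReal.eq
  simp [Real.norm_eq_abs]

private lemma pow_norm_decay' {q : ℕ} (A : Matrix (Fin q) (Fin q) ℝ)
    (h : spectralRadius ℂ (A.map Complex.ofReal) < 1) :
    ∃ t : ℝ, 0 < t ∧ t < 1 ∧ ∃ C : ℝ, 1 ≤ C ∧ ∀ k : ℕ, ‖A ^ k‖ ≤ C * t ^ k := by
  haveI : CompleteSpace (Matrix (Fin q) (Fin q) ℂ) := FiniteDimensional.complete ℂ _
  set a := A.map Complex.ofReal with ha
  obtain ⟨r, hr1, hr2⟩ := ENNReal.lt_iff_exists_nnreal_btwn.1 h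
  have hr0 : 0 < r := by
    have h0 : (0:ℝ≥0∞) < (r:ℝ≥0∞) := lt_of_le_of_lt zero_le hr1
    exact_mod_cast h0
  have hmap : ∀ k : ℕ, a ^ k = (A ^ k).map Complex.ofReal := by
    intro k
    have h1 := map_pow (Complex.ofRealHom.mapMatrix :
        Matrix (Fin q) (Fin q) ℝ →+* Matrix (Fin q) (Fin q) ℂ) A k
    exact h1.symm
  have hnorm : ∀ k : ℕ, ‖A ^ k‖ = ‖a ^ k‖ := by
    intro k; rw [hmap k, norm_map_ofReal']
  have hgel := spectrum.pow_nnnorm_pow_one_div_tendsto_nhds_spectralRadius a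
  obtain ⟨N, hN⟩ := eventually_atTop.1 (hgel.eventually_lt_const hr1)
  have hpow : ∀ k, N + 1 ≤ k → ‖A ^ k‖ ≤ (r:ℝ) ^ k := by
    intro k hk
    have h1 := hN k (by omega)
    have hk0 : (k:ℝ) ≠ 0 := by
      have : 0 < k := by omega
      positivity
    have h2 : (‖a ^ k‖₊ : ℝ≥0∞) < (r : ℝ≥0∞) ^ (k : ℕ) := by
      have h3 := ENNReal.rpow_lt_rpow h1 (show (0:ℝ) < (k:ℝ) by
        have : 0 < k := by omega
        positivity)
      rwa [← ENNReal.rpow_mul, one_div, inv_mul_cancel₀ hk0, ENNReal.rpow_one,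
        ENNReal.rpow_natCast] at h3
    have h3 : ‖a ^ k‖₊ ≤ r ^ k := by exact_mod_cast h2.le
    rw [hnorm k]
    exact_mod_cast h3
  have hrpos : (0:ℝ) < (r:ℝ) := by exact_mod_cast hr0
  have hS : 0 ≤ ∑ j ∈ Finset.range (N + 1), ‖A ^ j‖ / (r:ℝ) ^ j :=
    Finset.sum_nonneg fun j _ => by positivity
  refine ⟨(r:ℝ), hrpos, by exact_mod_cast hr2,
    1 + ∑ j ∈ Finset.range (N + 1), ‖A ^ j‖ / (r:ℝ) ^ j, by linarith, ?_⟩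
  intro k
  rcases lt_or_ge k (N + 1) with hk | hk
  · have hmem : ‖A ^ k‖ / (r:ℝ) ^ k ≤ 1 + ∑ j ∈ Finset.range (N + 1), ‖A ^ j‖ / (r:ℝ) ^ j := by
      have h1 : ‖A ^ k‖ / (r:ℝ) ^ k ≤ ∑ j ∈ Finset.range (N + 1), ‖A ^ j‖ / (r:ℝ) ^ j :=
        Finset.single_le_sum (f := fun j => ‖A ^ j‖ / (r:ℝ) ^ j)
          (fun j _ => by positivity) (Finset.mem_range.2 hk)
      linarith
    have := mul_le_mul_of_nonneg_right hmem (le_of_lt (pow_pos hrpos k))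
    rwa [div_mul_cancel₀] at this
    positivity
  · calc ‖A ^ k‖ ≤ (r:ℝ) ^ k := hpow k hk
    _ ≤ (1 + ∑ j ∈ Finset.range (N + 1), ‖A ^ j‖ / (r:ℝ) ^ j) * (r:ℝ) ^ k := by
        nlinarith [pow_pos hrpos k]

private lemma abs_dotProduct_le'' {q : ℕ} (v w : Fin q → ℝ) :
    |v ⬝ᵥ w| ≤ (q : ℝ) * (‖v‖ * ‖w‖) := by
  calc |v ⬝ᵥ w| ≤ ∑ i, |v i * w i| := Finset.abs_sum_le_sum_abs _ _
    _ ≤ ∑ _i : Fin q, ‖v‖ * ‖w‖ := by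
        refine Finset.sum_le_sum fun i _ => ?_
        rw [abs_mul]
        have h1 : |v i| ≤ ‖v‖ := norm_le_pi_norm v i
        have h2 : |w i| ≤ ‖w‖ := norm_le_pi_norm w i
        exact mul_le_mul h1 h2 (abs_nonneg _) (norm_nonneg _)
    _ = (q : ℝ) * (‖v‖ * ‖w‖) := by
        simp [Finset.sum_const, Finset.card_univ, nsmul_eq_mul]

private lemma duhamel' {n np : ℕ} (F : Matrix (Fin n) (Fin n) ℝ) (Ω : Matrix (Fin n) (Fin np) ℝ)
    (e : ℕ → Fin n → ℝ) (etil : ℕ → Fin np → ℝ)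
    (he : ∀ k : ℕ, e (k + 1) = F.mulVec (e k) + Ω.mulVec (etil k)) :
    ∀ k : ℕ, e k = (F ^ k).mulVec (e 0) +
      ∑ j ∈ Finset.range k, (F ^ j).mulVec (Ω.mulVec (etil (k - 1 - j))) := by
  intro k
  induction k with
  | zero => simp [Matrix.one_mulVec]
  | succ k ih =>
    have hstep : ∀ (v : ℕ → Fin n → ℝ),
        F *ᵥ (∑ j ∈ Finset.range k, v j) = ∑ j ∈ Finset.range k, F *ᵥ (v j) := fun v => by
      exact map_sum (Matrix.mulVecLin F) v (Finset.range k)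
    calc e (k+1) = F *ᵥ e k + Ω *ᵥ etil k := he k
      _ = F *ᵥ (F ^ k *ᵥ e 0) + ((∑ j ∈ Finset.range k,
            F *ᵥ (F ^ j *ᵥ (Ω *ᵥ etil (k - 1 - j)))) + Ω *ᵥ etil k) := by
          rw [ih, Matrix.mulVec_add, hstep, add_assoc]
      _ = F ^ (k+1) *ᵥ e 0 + ((∑ j ∈ Finset.range k,
            F ^ (j+1) *ᵥ (Ω *ᵥ etil (k + 1 - 1 - (j+1)))) + F ^ 0 *ᵥ (Ω *ᵥ etil (k + 1 - 1 - 0))) := by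
          congr 1
          · rw [Matrix.mulVec_mulVec, ← pow_succ']
          congr 1
          · apply Finset.sum_congr rfl
            intro j hj
            have hx : k + 1 - 1 - (j + 1) = k - 1 - j := by omega
            rw [hx, Matrix.mulVec_mulVec, ← pow_succ']
          · simp
      _ = F ^ (k+1) *ᵥ e 0 + ∑ j ∈ Finset.range (k+1), F ^ j *ᵥ (Ω *ᵥ etil (k + 1 - 1 - j)) := by
          rw [Finset.sum_range_succ']

private lemma vec_decay' {n np : ℕ} (F : Matrix (Fin n) (Fin n) ℝ) (Ω : Matrix (Fin n) (Fin np) ℝ)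
    (G : Matrix (Fin np) (Fin np) ℝ) (e : ℕ → Fin n → ℝ) (etil : ℕ → Fin np → ℝ)
    (he : ∀ k : ℕ, e (k + 1) = F.mulVec (e k) + Ω.mulVec (etil k))
    (hetil : ∀ k : ℕ, etil (k + 1) = G.mulVec (etil k))
    (hFs : spectralRadius ℂ (F.map Complex.ofReal) < 1)
    (hGs : spectralRadius ℂ (G.map Complex.ofReal) < 1) :
    ∃ E u : ℝ, 0 < E ∧ 0 < u ∧ u < 1 ∧
      ∀ k : ℕ, ‖e k‖ ≤ E * u ^ k ∧ ‖etil k‖ ≤ E * u ^ k := by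
  obtain ⟨tF, htF0, htF1, CF, hCF1, hCF⟩ := pow_norm_decay' F hFs
  obtain ⟨tG, htG0, htG1, CG, hCG1, hCG⟩ := pow_norm_decay' G hGs
  set t : ℝ := max tF tG with htdef
  have ht0 : 0 < t := lt_of_lt_of_le htF0 (le_max_left _ _)
  have ht1 : t < 1 := max_lt htF1 htG1
  set Cm : ℝ := max CF CG with hCmdef
  have hCm1 : (1:ℝ) ≤ Cm := le_trans hCF1 (le_max_left _ _)
  have hCm0 : (0:ℝ) < Cm := lt_of_lt_of_le one_pos hCm1
  have hFk : ∀ k : ℕ, ‖F ^ k‖ ≤ Cm * t ^ k := by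
    intro k
    refine le_trans (hCF k) (mul_le_mul (le_max_left _ _)
      (pow_le_pow_left₀ htF0.le (le_max_left _ _) k) (pow_nonneg htF0.le k)
      (le_trans zero_le_one hCm1))
  have hGk : ∀ k : ℕ, ‖G ^ k‖ ≤ Cm * t ^ k := by
    intro k
    refine le_trans (hCG k) (mul_le_mul (le_max_right _ _)
      (pow_le_pow_left₀ htG0.le (le_max_right _ _) k) (pow_nonneg htG0.le k)
      (le_trans zero_le_one hCm1))
  -- closed form for etil
  have hetilform : ∀ k : ℕ, etil k = (G ^ k) *ᵥ etil 0 := by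
    intro k
    induction k with
    | zero => simp [Matrix.one_mulVec]
    | succ k ih => rw [hetil k, ih, Matrix.mulVec_mulVec, ← pow_succ']
  set Et : ℝ := Cm * ‖etil 0‖ with hEtdef
  have hEt0 : 0 ≤ Et := mul_nonneg hCm0.le (norm_nonneg _)
  have hetilb : ∀ k : ℕ, ‖etil k‖ ≤ Et * t ^ k := by
    intro k
    rw [hetilform k]
    calc ‖(G ^ k) *ᵥ etil 0‖ ≤ ‖G ^ k‖ * ‖etil 0‖ := Matrix.linfty_opNorm_mulVec _ _
      _ ≤ (Cm * t ^ k) * ‖etil 0‖ :=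
          mul_le_mul_of_nonneg_right (hGk k) (norm_nonneg _)
      _ = Et * t ^ k := by rw [hEtdef]; ring
  set a : ℝ := Cm * ‖e 0‖ with hadef
  set b : ℝ := Cm * (‖Ω‖ * Et) with hbdef
  have ha0 : 0 ≤ a := mul_nonneg hCm0.le (norm_nonneg _)
  have hb0 : 0 ≤ b := mul_nonneg hCm0.le (mul_nonneg (norm_nonneg _) hEt0)
  have heb : ∀ k : ℕ, ‖e k‖ ≤ a * t ^ k + b * k * t ^ (k - 1) := by
    intro k
    rw [duhamel' F Ω e etil he k]
    calc ‖(F ^ k) *ᵥ e 0 + ∑ j ∈ Finset.range k, (F ^ j) *ᵥ (Ω *ᵥ etil (k - 1 - j))‖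
        ≤ ‖(F ^ k) *ᵥ e 0‖ + ‖∑ j ∈ Finset.range k, (F ^ j) *ᵥ (Ω *ᵥ etil (k - 1 - j))‖ :=
          norm_add_le _ _
      _ ≤ a * t ^ k + ∑ j ∈ Finset.range k, ‖(F ^ j) *ᵥ (Ω *ᵥ etil (k - 1 - j))‖ := by
          refine add_le_add ?_ (norm_sum_le _ _)
          calc ‖(F ^ k) *ᵥ e 0‖ ≤ ‖F ^ k‖ * ‖e 0‖ := Matrix.linfty_opNorm_mulVec _ _
            _ ≤ (Cm * t ^ k) * ‖e 0‖ := mul_le_mul_of_nonneg_right (hFk k) (norm_nonneg _)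
            _ = a * t ^ k := by rw [hadef]; ring
      _ ≤ a * t ^ k + ∑ _j ∈ Finset.range k, b * t ^ (k - 1) := by
          refine add_le_add_right (Finset.sum_le_sum fun j hj => ?_) _
          have hjk : j + (k - 1 - j) = k - 1 := by
            have := Finset.mem_range.1 hj; omega
          calc ‖(F ^ j) *ᵥ (Ω *ᵥ etil (k - 1 - j))‖
              ≤ ‖F ^ j‖ * ‖Ω *ᵥ etil (k - 1 - j)‖ := Matrix.linfty_opNorm_mulVec _ _
            _ ≤ ‖F ^ j‖ * (‖Ω‖ * ‖etil (k - 1 - j)‖) :=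
                mul_le_mul_of_nonneg_left (Matrix.linfty_opNorm_mulVec _ _) (norm_nonneg _)
            _ ≤ (Cm * t ^ j) * (‖Ω‖ * (Et * t ^ (k - 1 - j))) := by
                refine mul_le_mul (hFk j) ?_ (mul_nonneg (norm_nonneg _) (norm_nonneg _))
                  (mul_nonneg hCm0.le (pow_nonneg ht0.le _))
                exact mul_le_mul_of_nonneg_left (hetilb _) (norm_nonneg _)
            _ = b * (t ^ j * t ^ (k - 1 - j)) := by rw [hbdef]; ring
            _ = b * t ^ (k - 1) := by rw [← pow_add, hjk]
      _ = a * t ^ k + b * k * t ^ (k - 1) := by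
          rw [Finset.sum_const, Finset.card_range, nsmul_eq_mul]; ring
  -- pass to a slightly larger rate u
  set u : ℝ := (t + 1) / 2 with hudef
  have htu : t < u := by rw [hudef]; linarith
  have hu0 : 0 < u := lt_trans ht0 htu
  have hu1 : u < 1 := by rw [hudef]; linarith
  set q : ℝ := t / u with hqdef
  have hq0 : 0 ≤ q := div_nonneg ht0.le hu0.le
  have hq1 : q < 1 := (div_lt_one hu0).2 htu
  set φ : ℕ → ℝ := fun k => a * q ^ k + (b / t) * ((k : ℝ) * q ^ k) with hφdef
  have hφ0 : Tendsto φ atTop (𝓝 0) := by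
    have h1 : Tendsto (fun k : ℕ => (k : ℝ) * q ^ k) atTop (𝓝 0) := by
      have hs := (summable_pow_mul_geometric_of_norm_lt_one 1
        (r := q) (by rw [Real.norm_eq_abs, abs_of_nonneg hq0]; exact hq1)).tendsto_atTop_zero
      simpa using hs
    have h2 : Tendsto (fun k : ℕ => q ^ k) atTop (𝓝 0) :=
      tendsto_pow_atTop_nhds_zero_of_lt_one hq0 hq1
    have h3 := (h2.const_mul a).add (h1.const_mul (b / t))
    simpa using h3
  obtain ⟨M, hM⟩ := hφ0.bddAbove_range
  have hMk : ∀ k : ℕ, φ k ≤ M := fun k => hM ⟨k, rfl⟩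
  have hphi_mul : ∀ k : ℕ, φ k * u ^ k = a * t ^ k + b * k * t ^ (k - 1) := by
    intro k
    have hqu : q ^ k * u ^ k = t ^ k := by
      rw [hqdef, div_pow, div_mul_cancel₀ _ (pow_ne_zero k hu0.ne')]
    cases k with
    | zero => simp [hφdef]
    | succ k =>
      have h1 : (b / t) * t ^ (k + 1) = b * t ^ k := by
        rw [pow_succ]
        field_simp
      calc φ (k+1) * u ^ (k+1)
          = a * (q ^ (k+1) * u ^ (k+1)) + (b / t) * ((k+1 : ℕ) : ℝ) * (q ^ (k+1) * u ^ (k+1)) := by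
            rw [hφdef]; ring
        _ = a * t ^ (k+1) + ((k+1 : ℕ) : ℝ) * ((b / t) * t ^ (k+1)) := by rw [hqu]; ring
        _ = a * t ^ (k+1) + b * ((k+1 : ℕ) : ℝ) * t ^ k := by rw [h1]; ring
        _ = a * t ^ (k+1) + b * ((k+1 : ℕ) : ℝ) * t ^ (k + 1 - 1) := by norm_num
  have he_u : ∀ k : ℕ, ‖e k‖ ≤ M * u ^ k := by
    intro k
    calc ‖e k‖ ≤ a * t ^ k + b * k * t ^ (k - 1) := heb k
      _ = φ k * u ^ k := (hphi_mul k).symm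
      _ ≤ M * u ^ k := mul_le_mul_of_nonneg_right (hMk k) (pow_nonneg hu0.le k)
  have hetil_u : ∀ k : ℕ, ‖etil k‖ ≤ Et * u ^ k := by
    intro k
    refine le_trans (hetilb k) (mul_le_mul_of_nonneg_left ?_ hEt0)
    exact pow_le_pow_left₀ ht0.le htu.le k
  refine ⟨max (max M Et) 1, u, lt_of_lt_of_le one_pos (le_max_right _ _), hu0, hu1, ?_⟩
  intro k
  constructor
  · exact le_trans (he_u k) (mul_le_mul_of_nonneg_right
      (le_trans (le_max_left _ _) (le_max_left _ _)) (pow_nonneg hu0.le k))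
  · exact le_trans (hetil_u k) (mul_le_mul_of_nonneg_right
      (le_trans (le_max_right _ _) (le_max_left _ _)) (pow_nonneg hu0.le k))

/-- Asymptotic optimality of the observer-based controller: with
`e(k+1) = F e(k) + Ω ẽ(k)`, `ẽ(k+1) = G ẽ(k)`, `ρ(F) < 1`, `ρ(G) < 1`, `F = Ã + B̄K`, and
`P > 0` satisfying `FᵀPF − P = −(Q̃ + KᵀRK)` with `Q̃ ⪰ 0`, `R ≻ 0`, the realized cost
`J⋆(s) = Σ_{k=s}^∞ [e(k)ᵀQ̃e(k) + (Ke(k)+Dẽ(k))ᵀR(Ke(k)+Dẽ(k))]` is finite for every `s`,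
and `J⋆(s) − e(s)ᵀPe(s) → 0` as `s → ∞`. -/
theorem observer_based_cost_asymptotically_optimal {n m p : ℕ}
    (Atil F P Qtil : Matrix (Fin n) (Fin n) ℝ) (Bbar : Matrix (Fin n) (Fin m) ℝ)
    (R : Matrix (Fin m) (Fin m) ℝ) (K : Matrix (Fin m) (Fin n) ℝ)
    (Ω : Matrix (Fin n) (Fin p) ℝ) (G : Matrix (Fin p) (Fin p) ℝ)
    (D : Matrix (Fin m) (Fin p) ℝ)
    (hF : F = Atil + Bbar * K)
    (hP : P.PosDef) (hQ : Qtil.PosSemidef) (hR : R.PosDef)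
    (hLyap : Fᵀ * P * F - P = -(Qtil + Kᵀ * R * K))
    (hFs : spectralRadius ℂ (F.map Complex.ofReal) < 1)
    (hGs : spectralRadius ℂ (G.map Complex.ofReal) < 1)
    (e : ℕ → Fin n → ℝ) (etil : ℕ → Fin p → ℝ)
    (he : ∀ k : ℕ, e (k + 1) = F.mulVec (e k) + Ω.mulVec (etil k))
    (hetil : ∀ k : ℕ, etil (k + 1) = G.mulVec (etil k)) :
    (∀ s : ℕ, Summable (fun k : ℕ =>
        (e (s + k)) ⬝ᵥ Qtil.mulVec (e (s + k)) +
        (K.mulVec (e (s + k)) + D.mulVec (etil (s + k))) ⬝ᵥ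
          R.mulVec (K.mulVec (e (s + k)) + D.mulVec (etil (s + k))))) ∧
    Tendsto (fun s : ℕ =>
        (∑' k : ℕ,
          ((e (s + k)) ⬝ᵥ Qtil.mulVec (e (s + k)) +
           (K.mulVec (e (s + k)) + D.mulVec (etil (s + k))) ⬝ᵥ
             R.mulVec (K.mulVec (e (s + k)) + D.mulVec (etil (s + k)))))
          - (e s) ⬝ᵥ P.mulVec (e s)) atTop (𝓝 0) := by
  obtain ⟨E, u, hE0, hu0, hu1, hEu⟩ := vec_decay' F Ω G e etil he hetil hFs hGs
  set v : ℝ := u ^ 2 with hvdef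
  have hv0 : (0:ℝ) ≤ v := sq_nonneg u
  have hv1 : v < 1 := by
    rw [hvdef]
    nlinarith
  set Cb : ℝ := (n:ℝ) * ‖Qtil‖ * E ^ 2 + (m:ℝ) * ‖R‖ * ((‖K‖ + ‖D‖) * E) ^ 2 with hCbdef
  have hCb0 : (0:ℝ) ≤ Cb := by
    rw [hCbdef]; positivity
  have key : ∀ s k : ℕ,
      0 ≤ (e (s + k)) ⬝ᵥ Qtil.mulVec (e (s + k)) +
        (K.mulVec (e (s + k)) + D.mulVec (etil (s + k))) ⬝ᵥ
          R.mulVec (K.mulVec (e (s + k)) + D.mulVec (etil (s + k))) ∧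
      (e (s + k)) ⬝ᵥ Qtil.mulVec (e (s + k)) +
        (K.mulVec (e (s + k)) + D.mulVec (etil (s + k))) ⬝ᵥ
          R.mulVec (K.mulVec (e (s + k)) + D.mulVec (etil (s + k))) ≤ Cb * v ^ s * v ^ k := by
    intro s k
    set x : Fin n → ℝ := e (s + k) with hxdef
    set y : Fin p → ℝ := etil (s + k) with hydef
    set w : Fin m → ℝ := K.mulVec x + D.mulVec y with hwdef
    have h1 : 0 ≤ x ⬝ᵥ Qtil.mulVec x := by simpa using hQ.dotProduct_mulVec_nonneg x
    have h2 : 0 ≤ w ⬝ᵥ R.mulVec w := by simpa using hR.posSemidef.dotProduct_mulVec_nonneg w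
    have hx : ‖x‖ ≤ E * u ^ (s + k) := (hEu (s + k)).1
    have hy : ‖y‖ ≤ E * u ^ (s + k) := (hEu (s + k)).2
    have hX0 : (0:ℝ) ≤ E * u ^ (s + k) := mul_nonneg hE0.le (pow_nonneg hu0.le _)
    have hw : ‖w‖ ≤ (‖K‖ + ‖D‖) * (E * u ^ (s + k)) := by
      calc ‖w‖ ≤ ‖K.mulVec x‖ + ‖D.mulVec y‖ := norm_add_le _ _
        _ ≤ ‖K‖ * ‖x‖ + ‖D‖ * ‖y‖ :=
            add_le_add (Matrix.linfty_opNorm_mulVec _ _) (Matrix.linfty_opNorm_mulVec _ _)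
        _ ≤ ‖K‖ * (E * u ^ (s + k)) + ‖D‖ * (E * u ^ (s + k)) :=
            add_le_add (mul_le_mul_of_nonneg_left hx (norm_nonneg _))
              (mul_le_mul_of_nonneg_left hy (norm_nonneg _))
        _ = (‖K‖ + ‖D‖) * (E * u ^ (s + k)) := by ring
    have hW0 : (0:ℝ) ≤ (‖K‖ + ‖D‖) * (E * u ^ (s + k)) :=
      mul_nonneg (add_nonneg (norm_nonneg _) (norm_nonneg _)) hX0
    have h6 : v ^ s * v ^ k = (u ^ (s + k)) ^ 2 := by
      rw [hvdef, ← pow_add, ← pow_mul, ← pow_mul, Nat.mul_comm]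
    have hT1 : x ⬝ᵥ Qtil.mulVec x ≤ (n:ℝ) * ‖Qtil‖ * E ^ 2 * (v ^ s * v ^ k) := by
      have h3 : ‖Qtil.mulVec x‖ ≤ ‖Qtil‖ * (E * u ^ (s + k)) :=
        le_trans (Matrix.linfty_opNorm_mulVec _ _)
          (mul_le_mul_of_nonneg_left hx (norm_nonneg _))
      have h5 : ‖x‖ * ‖Qtil.mulVec x‖ ≤ (E * u ^ (s + k)) * (‖Qtil‖ * (E * u ^ (s + k))) :=
        mul_le_mul hx h3 (norm_nonneg _) hX0
      calc x ⬝ᵥ Qtil.mulVec x ≤ |x ⬝ᵥ Qtil.mulVec x| := le_abs_self _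
        _ ≤ (n:ℝ) * (‖x‖ * ‖Qtil.mulVec x‖) := abs_dotProduct_le'' _ _
        _ ≤ (n:ℝ) * ((E * u ^ (s + k)) * (‖Qtil‖ * (E * u ^ (s + k)))) :=
            mul_le_mul_of_nonneg_left h5 (Nat.cast_nonneg n)
        _ = (n:ℝ) * ‖Qtil‖ * E ^ 2 * (u ^ (s + k)) ^ 2 := by ring
        _ = (n:ℝ) * ‖Qtil‖ * E ^ 2 * (v ^ s * v ^ k) := by rw [h6]
    have hT2 : w ⬝ᵥ R.mulVec w ≤ (m:ℝ) * ‖R‖ * ((‖K‖ + ‖D‖) * E) ^ 2 * (v ^ s * v ^ k) := by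
      have h3 : ‖R.mulVec w‖ ≤ ‖R‖ * ((‖K‖ + ‖D‖) * (E * u ^ (s + k))) :=
        le_trans (Matrix.linfty_opNorm_mulVec _ _)
          (mul_le_mul_of_nonneg_left hw (norm_nonneg _))
      have h5 : ‖w‖ * ‖R.mulVec w‖ ≤ ((‖K‖ + ‖D‖) * (E * u ^ (s + k))) *
          (‖R‖ * ((‖K‖ + ‖D‖) * (E * u ^ (s + k)))) :=
        mul_le_mul hw h3 (norm_nonneg _) hW0
      calc w ⬝ᵥ R.mulVec w ≤ |w ⬝ᵥ R.mulVec w| := le_abs_self _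
        _ ≤ (m:ℝ) * (‖w‖ * ‖R.mulVec w‖) := abs_dotProduct_le'' _ _
        _ ≤ (m:ℝ) * (((‖K‖ + ‖D‖) * (E * u ^ (s + k))) *
            (‖R‖ * ((‖K‖ + ‖D‖) * (E * u ^ (s + k))))) :=
            mul_le_mul_of_nonneg_left h5 (Nat.cast_nonneg m)
        _ = (m:ℝ) * ‖R‖ * ((‖K‖ + ‖D‖) * E) ^ 2 * (u ^ (s + k)) ^ 2 := by ring
        _ = (m:ℝ) * ‖R‖ * ((‖K‖ + ‖D‖) * E) ^ 2 * (v ^ s * v ^ k) := by rw [h6]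
    refine ⟨add_nonneg h1 h2, ?_⟩
    calc x ⬝ᵥ Qtil.mulVec x + w ⬝ᵥ R.mulVec w
        ≤ (n:ℝ) * ‖Qtil‖ * E ^ 2 * (v ^ s * v ^ k) +
          (m:ℝ) * ‖R‖ * ((‖K‖ + ‖D‖) * E) ^ 2 * (v ^ s * v ^ k) := add_le_add hT1 hT2
      _ = Cb * v ^ s * v ^ k := by rw [hCbdef]; ring
  have hgeo : Summable (fun k : ℕ => v ^ k) := summable_geometric_of_lt_one hv0 hv1
  have hsum : ∀ s : ℕ, Summable (fun k : ℕ =>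
      (e (s + k)) ⬝ᵥ Qtil.mulVec (e (s + k)) +
      (K.mulVec (e (s + k)) + D.mulVec (etil (s + k))) ⬝ᵥ
        R.mulVec (K.mulVec (e (s + k)) + D.mulVec (etil (s + k)))) := by
    intro s
    exact Summable.of_nonneg_of_le (fun k => (key s k).1) (fun k => (key s k).2)
      (hgeo.mul_left (Cb * v ^ s))
  refine ⟨hsum, ?_⟩
  have hJle : ∀ s : ℕ, (∑' k : ℕ,
      ((e (s + k)) ⬝ᵥ Qtil.mulVec (e (s + k)) +
      (K.mulVec (e (s + k)) + D.mulVec (etil (s + k))) ⬝ᵥ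
        R.mulVec (K.mulVec (e (s + k)) + D.mulVec (etil (s + k)))))
      ≤ Cb * v ^ s * (1 - v)⁻¹ := by
    intro s
    calc (∑' k : ℕ, _) ≤ ∑' k : ℕ, Cb * v ^ s * v ^ k :=
        Summable.tsum_le_tsum (fun k => (key s k).2) (hsum s) (hgeo.mul_left _)
      _ = Cb * v ^ s * (1 - v)⁻¹ := by
        rw [tsum_mul_left, tsum_geometric_of_lt_one hv0 hv1]
  have hJ0 : ∀ s : ℕ, 0 ≤ (∑' k : ℕ,
      ((e (s + k)) ⬝ᵥ Qtil.mulVec (e (s + k)) +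
      (K.mulVec (e (s + k)) + D.mulVec (etil (s + k))) ⬝ᵥ
        R.mulVec (K.mulVec (e (s + k)) + D.mulVec (etil (s + k))))) :=
    fun s => tsum_nonneg fun k => (key s k).1
  have hbT : Tendsto (fun s : ℕ => Cb * v ^ s * (1 - v)⁻¹) atTop (𝓝 0) := by
    have h1 := ((tendsto_pow_atTop_nhds_zero_of_lt_one hv0 hv1).const_mul Cb).mul_const (1 - v)⁻¹
    simpa using h1
  have hJtend : Tendsto (fun s : ℕ => (∑' k : ℕ,
      ((e (s + k)) ⬝ᵥ Qtil.mulVec (e (s + k)) +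
      (K.mulVec (e (s + k)) + D.mulVec (etil (s + k))) ⬝ᵥ
        R.mulVec (K.mulVec (e (s + k)) + D.mulVec (etil (s + k)))))) atTop (𝓝 0) :=
    squeeze_zero hJ0 hJle hbT
  have hePtend : Tendsto (fun s : ℕ => (e s) ⬝ᵥ P.mulVec (e s)) atTop (𝓝 0) := by
    have hb : ∀ s : ℕ, ‖(e s) ⬝ᵥ P.mulVec (e s)‖ ≤ (n:ℝ) * ‖P‖ * E ^ 2 * v ^ s := by
      intro s
      have hx : ‖e s‖ ≤ E * u ^ s := by
        simpa using (hEu s).1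
      have hX0 : (0:ℝ) ≤ E * u ^ s := mul_nonneg hE0.le (pow_nonneg hu0.le _)
      have h3 : ‖P.mulVec (e s)‖ ≤ ‖P‖ * (E * u ^ s) :=
        le_trans (Matrix.linfty_opNorm_mulVec _ _)
          (mul_le_mul_of_nonneg_left hx (norm_nonneg _))
      have h5 : ‖e s‖ * ‖P.mulVec (e s)‖ ≤ (E * u ^ s) * (‖P‖ * (E * u ^ s)) :=
        mul_le_mul hx h3 (norm_nonneg _) hX0
      calc ‖(e s) ⬝ᵥ P.mulVec (e s)‖ = |(e s) ⬝ᵥ P.mulVec (e s)| := Real.norm_eq_abs _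
        _ ≤ (n:ℝ) * (‖e s‖ * ‖P.mulVec (e s)‖) := abs_dotProduct_le'' _ _
        _ ≤ (n:ℝ) * ((E * u ^ s) * (‖P‖ * (E * u ^ s))) :=
            mul_le_mul_of_nonneg_left h5 (Nat.cast_nonneg n)
        _ = (n:ℝ) * ‖P‖ * E ^ 2 * v ^ s := by rw [hvdef]; ring
    have hg : Tendsto (fun s : ℕ => (n:ℝ) * ‖P‖ * E ^ 2 * v ^ s) atTop (𝓝 0) := by
      have h1 := (tendsto_pow_atTop_nhds_zero_of_lt_one hv0 hv1).const_mul
        ((n:ℝ) * ‖P‖ * E ^ 2)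
      simpa using h1
    exact squeeze_zero_norm hb hg
  simpa using hJtend.sub hePtend
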